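/- arXiv:2401.00705 — 4 statements merged into one kernel-verified Lean document; each statement's English description precedes it below -/
import Mathlib

section
/- For any tree T, the metric dimension of its cube is at least the metric dimension of the tree: β(T^3) ≥ β(T). -/
open SimpleGraph

/-- Ceiling of `n / 3` over the naturals. -/
def ceil3 (n : ℕ) : ℕ := (n + 2) / 3

/-- The cube of a graph: same vertices, `u,v` adjacent iff `1 ≤ d(u,v) ≤ 3`. -/
def cube {V : Type*} (G : SimpleGraph V) : SimpleGraph V where
  Adj u v := u ≠ v ∧ 1 ≤ G.dist u v ∧ G.dist u v ≤ 3
  symm := ⟨fun u v ⟨h1, h2, h3⟩ =>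
    ⟨h1.symm, by rwa [SimpleGraph.dist_comm], by rwa [SimpleGraph.dist_comm]⟩⟩
  loopless := ⟨fun u ⟨h, _⟩ => h rfl⟩

/-- `S` is a resolving set of `G`. -/
def IsResolving {V : Type*} (G : SimpleGraph V) (S : Set V) : Prop :=
  ∀ u v : V, u ≠ v → ∃ s ∈ S, G.dist s u ≠ G.dist s v

/-- The metric dimension of a graph on a finite vertex type. -/
noncomputable def metricDim {V : Type*} [Fintype V] (G : SimpleGraph V) : ℕ :=
  sInf {n | ∃ S : Finset V, S.card = n ∧ IsResolving G (S : Set V)}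

-- step lemma
lemma step_lemma {V : Type*} {G : SimpleGraph V} (hc : G.Connected) {u v : V} {d : ℕ}
    (h : G.dist u v = d + 1) : ∃ w, G.Adj u w ∧ G.dist w v = d := by
  obtain ⟨p, hp⟩ := exists_walk_of_dist_ne_zero (by omega : G.dist u v ≠ 0)
  cases p with
  | nil => simp at h
  | cons hadj q =>
    rename_i w
    refine ⟨w, hadj, ?_⟩
    have h1 : G.dist w v ≤ d := by
      have := SimpleGraph.dist_le q
      simp [Walk.length_cons] at hp
      omega
    have h2 : G.dist u v ≤ G.dist u w + G.dist w v := hc.dist_triangle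
    have h3 : G.dist u w = 1 := SimpleGraph.dist_eq_one_iff_adj.mpr hadj
    omega

lemma cube_connected {V : Type*} {G : SimpleGraph V} (hc : G.Connected) :
    (cube G).Connected := by
  apply hc.mono
  intro u v h
  exact ⟨h.ne, by simp [SimpleGraph.dist_eq_one_iff_adj.mpr h]⟩

lemma cube_dist_le {V : Type*} {G : SimpleGraph V} (hc : G.Connected) :
    ∀ (d : ℕ) (u v : V), G.dist u v = d → (cube G).dist u v ≤ ceil3 d := by
  intro d
  induction d using Nat.strong_induction_on with
  | _ d ih =>
    intro u v hd
    rcases Nat.lt_or_ge d 4 with h4 | h4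
    · rcases Nat.eq_zero_or_pos d with h0 | h0
      · subst h0
        have : u = v := hc.dist_eq_zero_iff.mp hd
        simp [this, ceil3]
      · have hne : u ≠ v := by
          rintro rfl
          have := SimpleGraph.dist_self (G := G) (v := u)
          omega
        have : (cube G).Adj u v := ⟨hne, by omega, by omega⟩
        have := SimpleGraph.dist_eq_one_iff_adj.mpr this
        have : (cube G).dist u v = 1 := this
        simp [this, ceil3]; omega
    · obtain ⟨d', rfl⟩ : ∃ d', d = d' + 1 := ⟨d - 1, by omega⟩
      obtain ⟨w1, ha1, hd1⟩ := step_lemma hc hd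
      obtain ⟨d'', rfl⟩ : ∃ e, d' = e + 1 := ⟨d' - 1, by omega⟩
      obtain ⟨w2, ha2, hd2⟩ := step_lemma hc hd1
      obtain ⟨d3, rfl⟩ : ∃ e, d'' = e + 1 := ⟨d'' - 1, by omega⟩
      obtain ⟨w3, ha3, hd3⟩ := step_lemma hc hd2
      -- dist u w3 ≤ 3
      have hle3 : G.dist u w3 ≤ 3 := by
        have := SimpleGraph.dist_le (Walk.cons ha1 (Walk.cons ha2 (Walk.cons ha3 Walk.nil)))
        simpa using this
      have hge : 1 ≤ G.dist u w3 := by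
        have htr : G.dist u v ≤ G.dist u w3 + G.dist w3 v := hc.dist_triangle
        omega
      have hne : u ≠ w3 := by
        rintro rfl
        have := SimpleGraph.dist_self (G := G) (v := u)
        omega
      have hadj : (cube G).Adj u w3 := ⟨hne, hge, hle3⟩
      have htr : (cube G).dist u v ≤ (cube G).dist u w3 + (cube G).dist w3 v :=
        (cube_connected hc).dist_triangle
      have h1 : (cube G).dist u w3 = 1 := SimpleGraph.dist_eq_one_iff_adj.mpr hadj
      have h2 : (cube G).dist w3 v ≤ ceil3 d3 := ih d3 (by omega) w3 v hd3
      have : ceil3 (d3 + 1 + 1 + 1) = ceil3 d3 + 1 := by simp [ceil3]; omega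
      omega

lemma dist_le_walk {V : Type*} {G : SimpleGraph V} (hc : G.Connected) :
    ∀ {u v : V} (p : (cube G).Walk u v), G.dist u v ≤ 3 * p.length := by
  intro u v p
  induction p with
  | nil => simp
  | @cons a b c h q ih =>
    have htr : G.dist a c ≤ G.dist a b + G.dist b c := hc.dist_triangle
    have : G.dist a b ≤ 3 := h.2.2
    simp only [Walk.length_cons]
    omega

lemma dist_le_three_mul {V : Type*} {G : SimpleGraph V} (hc : G.Connected) (u v : V) :
    G.dist u v ≤ 3 * (cube G).dist u v := by
  obtain ⟨p, hp⟩ := (cube_connected hc).exists_walk_length_eq_dist u v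
  rw [← hp]
  exact dist_le_walk hc p

lemma cube_dist_eq {V : Type*} {G : SimpleGraph V} (hc : G.Connected) (u v : V) :
    (cube G).dist u v = ceil3 (G.dist u v) := by
  refine le_antisymm (cube_dist_le hc _ u v rfl) ?_
  have := dist_le_three_mul hc u v
  simp only [ceil3]
  omega

/-- For any tree, the metric dimension of its cube is at least that of the tree. -/
theorem metricDim_le_metricDim_cube {V : Type*} [Fintype V] (G : SimpleGraph V)
    (hT : G.IsTree) : metricDim G ≤ metricDim (cube G) := by
  classical
  have hc := hT.isConnected
  unfold metricDim
  apply csInf_le_csInf (OrderBot.bddBelow _)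
  · refine ⟨Fintype.card V, Finset.univ, Finset.card_univ, ?_⟩
    intro u v huv
    refine ⟨u, by simp, ?_⟩
    simp only [SimpleGraph.dist_self]
    exact ((cube_connected hc).pos_dist_of_ne huv).ne
  · rintro n ⟨S, hcard, hres⟩
    refine ⟨S, hcard, ?_⟩
    intro u v huv
    obtain ⟨s, hs, hne⟩ := hres u v huv
    refine ⟨s, hs, ?_⟩
    intro heq
    apply hne
    rw [cube_dist_eq hc, cube_dist_eq hc, heq]
end

section
/- Let T be a tree and v a vertex of degree m ≥ 3 that is not a major stem (i.e., at most one component of T − v together with v forms a path). Then at least m − 1 of the m components of T − v contain a vertex of degree ≥ 3 in T which has at least two legs attached (a major stem of T). -/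
open SimpleGraph

/-- A connected component `D` of `T − w` is a *leg* (branch path) at `w` if the
branch it spans is a path, equivalently (in a tree) every vertex of it has
degree at most 2 in `T`. -/
def IsLegComp {V : Type*} [Fintype V] (G : SimpleGraph V) [DecidableRel G.Adj] (w : V)
    (D : (G.induce {x | x ≠ w}).ConnectedComponent) : Prop :=
  ∀ x ∈ D.supp, G.degree (x : V) ≤ 2

/-- A *major stem* is a vertex of degree ≥ 3 having at least two legs attached. -/
def IsMajorStem {V : Type*} [Fintype V] (G : SimpleGraph V) [DecidableRel G.Adj]
    (w : V) : Prop :=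
  3 ≤ G.degree w ∧ ∃ D₁ D₂ : (G.induce {x | x ≠ w}).ConnectedComponent,
    D₁ ≠ D₂ ∧ IsLegComp G w D₁ ∧ IsLegComp G w D₂


section Aux

variable {V : Type*} {G : SimpleGraph V}

private lemma reachable_induce_of_walk (G : SimpleGraph V) (s : Set V) {a b : V}
    (p : G.Walk a b) (h : ∀ x ∈ p.support, x ∈ s) (ha : a ∈ s) (hb : b ∈ s) :
    (G.induce s).Reachable ⟨a, ha⟩ ⟨b, hb⟩ := by
  induction p with
  | nil => exact Reachable.refl _
  | @cons a c b hadj q ih =>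
      have hc : c ∈ s := h c (by simp)
      have h1 : (G.induce s).Adj ⟨a, ha⟩ ⟨c, hc⟩ := by simpa using hadj
      exact h1.reachable.trans (ih (fun x hx => h x (by simp [hx])) hc hb)

private lemma exists_walk_of_reachable_induce {s : Set V} {a b : s}
    (h : (G.induce s).Reachable a b) :
    ∃ p : G.Walk a b, ∀ x ∈ p.support, x ∈ s := by
  obtain ⟨q⟩ := h
  refine ⟨q.map (Embedding.induce s).toHom, ?_⟩
  intro x hx
  replace hx : x ∈ q.support.map (Embedding.induce (G := G) s).toHom := by
    rw [← Walk.support_map]; exact hx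
  obtain ⟨y, _, rfl⟩ := List.mem_map.1 hx
  simp

private lemma comp_ne_of_adj (hT : G.IsTree) {w u₁ u₂ : V} (h1 : G.Adj w u₁) (h2 : G.Adj w u₂)
    (hne : u₁ ≠ u₂) (hu1 : u₁ ≠ w) (hu2 : u₂ ≠ w) :
    (G.induce {x | x ≠ w}).connectedComponentMk ⟨u₁, hu1⟩ ≠
      (G.induce {x | x ≠ w}).connectedComponentMk ⟨u₂, hu2⟩ := by
  classical
  intro heq
  obtain ⟨p, hp⟩ := exists_walk_of_reachable_induce (ConnectedComponent.exact heq)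
  have hq : (Walk.cons h1.symm (Walk.cons h2 Walk.nil) : G.Walk u₁ u₂).IsPath := by
    simp [Walk.isPath_def, hu1, hne, hu2.symm, h2.ne]
  have := hT.IsAcyclic.path_unique p.toPath ⟨_, hq⟩
  have hw : w ∈ (p.toPath : G.Walk u₁ u₂).support := by
    rw [this]; simp
  exact (hp w (Walk.support_toPath_subset p hw)) rfl

private lemma key_sep (hT : G.IsTree) {v w x : V} (hwv : w ≠ v) (hxw : x ≠ w)
    (hx : (G.induce {y | y ≠ w}).connectedComponentMk ⟨x, hxw⟩ ≠
          (G.induce {y | y ≠ w}).connectedComponentMk ⟨v, hwv.symm⟩) :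
    G.dist v w + 1 ≤ G.dist v x ∧ ∃ hxv : x ≠ v,
      (G.induce {y | y ≠ v}).connectedComponentMk ⟨x, hxv⟩ =
      (G.induce {y | y ≠ v}).connectedComponentMk ⟨w, hwv⟩ := by
  classical
  have hxv : x ≠ v := by
    rintro rfl; exact hx rfl
  obtain ⟨p, hplen⟩ := hT.isConnected.exists_walk_length_eq_dist v x
  have hpath : p.IsPath := p.isPath_of_length_eq_dist hplen
  have hw : w ∈ p.support := by
    by_contra hwmem
    refine hx (ConnectedComponent.sound ?_).symm
    exact reachable_induce_of_walk G _ p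
      (fun y hy => by rintro rfl; exact hwmem hy) hwv.symm hxw
  set q := p.takeUntil w hw with hq
  set r := p.dropUntil w hw with hr
  have hspec : q.append r = p := p.take_spec hw
  have hlen : q.length + r.length = p.length := by
    rw [← hspec, Walk.length_append]
  have hr1 : 1 ≤ r.length := by
    rcases Nat.eq_zero_or_pos r.length with h0 | h
    · exact absurd (Walk.eq_of_length_eq_zero h0) hxw.symm
    · exact h
  constructor
  · have hdq : G.dist v w ≤ q.length := G.dist_le q
    omega
  · refine ⟨hxv, (ConnectedComponent.sound ?_).symm⟩
    have hvr : ∀ y ∈ r.support, y ≠ v := by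
      intro y hy hyv
      subst hyv
      have hvq : y ∈ q.support := Walk.start_mem_support q
      have hvtail : y ∈ r.support.tail := by
        rw [r.support_eq_cons] at hy
        rcases List.mem_cons.mp hy with hy | hy
        · exact absurd hy.symm hwv
        · exact hy
      have hnodup := hpath.support_nodup
      rw [← hspec, Walk.support_append] at hnodup
      rw [List.nodup_append] at hnodup
      exact hnodup.2.2 y hvq y hvtail rfl
    exact reachable_induce_of_walk G _ r hvr hwv hxv

end Aux

private lemma exists_major_stem {V : Type*} [Fintype V] {G : SimpleGraph V}
    [DecidableRel G.Adj] (hT : G.IsTree) (v : V)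
    (D : (G.induce {x | x ≠ v}).ConnectedComponent)
    (x0 : {x // x ≠ v}) (hx0 : x0 ∈ D.supp) (hd3 : 3 ≤ G.degree (x0 : V)) :
    ∃ w ∈ D.supp, IsMajorStem G (w : V) := by
  classical
  set P : V → Prop := fun w =>
    ∃ h : w ≠ v, (G.induce {x | x ≠ v}).connectedComponentMk ⟨w, h⟩ = D ∧ 3 ≤ G.degree w
    with hP
  have hne : (Finset.univ.filter P).Nonempty := by
    refine ⟨(x0 : V), ?_⟩
    simp only [Finset.mem_filter, Finset.mem_univ, true_and, hP]
    exact ⟨x0.2, by rwa [Subtype.coe_eta, ← ConnectedComponent.mem_supp_iff], hd3⟩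
  obtain ⟨w, hwmem, hwmax⟩ := (Finset.univ.filter P).exists_max_image (G.dist v) hne
  rw [Finset.mem_filter] at hwmem
  obtain ⟨-, hwv, hwD, hwdeg⟩ := hwmem
  set Cv := (G.induce {y | y ≠ w}).connectedComponentMk ⟨v, hwv.symm⟩ with hCv
  set g : V → (G.induce {y | y ≠ w}).ConnectedComponent := fun u =>
    if h : u ≠ w then (G.induce {y | y ≠ w}).connectedComponentMk ⟨u, h⟩ else Cv with hg
  set N := G.neighborFinset w with hN
  have hNg : ∀ u ∈ N, ∀ h : u ≠ w, g u = (G.induce {y | y ≠ w}).connectedComponentMk ⟨u, h⟩ := by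
    intro u _ h; simp [hg, h]
  have hinj : ∀ u₁ ∈ N, ∀ u₂ ∈ N, u₁ ≠ u₂ → g u₁ ≠ g u₂ := by
    intro u₁ hu₁ u₂ hu₂ hne12
    have a1 : G.Adj w u₁ := by rwa [hN, mem_neighborFinset] at hu₁
    have a2 : G.Adj w u₂ := by rwa [hN, mem_neighborFinset] at hu₂
    rw [hNg u₁ hu₁ a1.ne', hNg u₂ hu₂ a2.ne']
    exact comp_ne_of_adj hT a1 a2 hne12 a1.ne' a2.ne'
  have hcard1 : (N.filter (fun u => g u = Cv)).card ≤ 1 := by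
    rw [Finset.card_le_one]
    intro u₁ h₁ u₂ h₂
    rw [Finset.mem_filter] at h₁ h₂
    by_contra hne12
    exact hinj u₁ h₁.1 u₂ h₂.1 hne12 (h₁.2.trans h₂.2.symm)
  have hcard : 2 ≤ (N.filter (fun u => ¬ g u = Cv)).card := by
    have := Finset.card_filter_add_card_filter_not (s := N) (p := fun u => g u = Cv)
    have hNc : 3 ≤ N.card := by rwa [hN, card_neighborFinset_eq_degree]
    omega
  obtain ⟨u₁, hu₁, u₂, hu₂, hne12⟩ := Finset.one_lt_card.mp hcard
  rw [Finset.mem_filter] at hu₁ hu₂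
  have hleg : ∀ (u : V), u ∈ N → ¬ g u = Cv → IsLegComp G w (g u) := by
    intro u hu hgu x hx
    have hxw : (x : V) ≠ w := x.2
    have hxC : (G.induce {y | y ≠ w}).connectedComponentMk ⟨(x : V), hxw⟩ ≠ Cv := by
      rw [ConnectedComponent.mem_supp_iff] at hx
      rw [Subtype.coe_eta, hx]
      exact hgu
    obtain ⟨hdist, hxv, hcomp⟩ := key_sep hT hwv hxw hxC
    by_contra hdeg
    have hPx : P (x : V) := ⟨hxv, by rw [hcomp, hwD], by omega⟩
    have := hwmax (x : V) (by simp [hPx])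
    omega
  refine ⟨⟨w, hwv⟩, ?_, hwdeg, g u₁, g u₂, hinj u₁ hu₁.1 u₂ hu₂.1 hne12,
    hleg u₁ hu₁.1 hu₁.2, hleg u₂ hu₂.1 hu₂.2⟩
  rwa [ConnectedComponent.mem_supp_iff]

/-- If a core vertex v of degree m ≥ 3 is not a major stem, then at least m − 1
of the components of T − v contain a major stem of T. -/
theorem components_contain_major_stems {V : Type*} [Fintype V] (G : SimpleGraph V)
    [DecidableRel G.Adj] (hT : G.IsTree) (v : V) (m : ℕ) (hdeg : G.degree v = m)
    (hm : 3 ≤ m) (hnot : ¬ IsMajorStem G v) :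
    m - 1 ≤ {D : (G.induce {x | x ≠ v}).ConnectedComponent |
      ∃ w ∈ D.supp, IsMajorStem G (w : V)}.ncard := by
  classical
  set S := {D : (G.induce {x | x ≠ v}).ConnectedComponent |
      ∃ w ∈ D.supp, IsMajorStem G (w : V)} with hS
  set N := G.neighborFinset v with hN
  have hNc : N.card = m := by rw [hN, card_neighborFinset_eq_degree, hdeg]
  obtain ⟨u₀, hu₀⟩ : N.Nonempty := Finset.card_pos.mp (by omega)
  have a₀ : G.Adj v u₀ := by rwa [hN, mem_neighborFinset] at hu₀
  set f : V → (G.induce {y | y ≠ v}).ConnectedComponent := fun u =>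
    if h : u ≠ v then (G.induce {y | y ≠ v}).connectedComponentMk ⟨u, h⟩
    else (G.induce {y | y ≠ v}).connectedComponentMk ⟨u₀, a₀.ne'⟩ with hf
  have hinj : ∀ u₁ ∈ N, ∀ u₂ ∈ N, u₁ ≠ u₂ → f u₁ ≠ f u₂ := by
    intro u₁ hu₁ u₂ hu₂ hne12
    have a1 : G.Adj v u₁ := by rwa [hN, mem_neighborFinset] at hu₁
    have a2 : G.Adj v u₂ := by rwa [hN, mem_neighborFinset] at hu₂
    simp only [hf, dif_pos a1.ne', dif_pos a2.ne']
    exact comp_ne_of_adj hT a1 a2 hne12 a1.ne' a2.ne'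
  have hleg1 : (N.filter (fun u => IsLegComp G v (f u))).card ≤ 1 := by
    rw [Finset.card_le_one]
    intro u₁ h₁ u₂ h₂
    rw [Finset.mem_filter] at h₁ h₂
    by_contra hne12
    exact hnot ⟨hdeg ▸ hm, f u₁, f u₂, hinj u₁ h₁.1 u₂ h₂.1 hne12, h₁.2, h₂.2⟩
  set NB := N.filter (fun u => ¬ IsLegComp G v (f u)) with hNB
  have hNBc : m - 1 ≤ NB.card := by
    have := Finset.card_filter_add_card_filter_not (s := N)
      (p := fun u => IsLegComp G v (f u))
    have hEq : (N.filter (fun a => ¬ IsLegComp G v (f a))).card = NB.card := rfl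
    omega
  have hsub : (↑(NB.image f) : Set _) ⊆ S := by
    intro D hD
    simp only [Finset.coe_image, Set.mem_image, Finset.mem_coe] at hD
    obtain ⟨u, hu, rfl⟩ := hD
    rw [hNB, Finset.mem_filter] at hu
    obtain ⟨huN, hnleg⟩ := hu
    rw [IsLegComp] at hnleg
    push_neg at hnleg
    obtain ⟨x, hx, hdx⟩ := hnleg
    exact exists_major_stem hT v (f u) x hx (by omega)
  calc m - 1 ≤ NB.card := hNBc
    _ = (NB.image f).card := (Finset.card_image_of_injOn (fun u₁ h₁ u₂ h₂ hfe => by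
          by_contra hne12
          exact hinj u₁ (Finset.mem_filter.mp h₁).1 u₂ (Finset.mem_filter.mp h₂).1 hne12 hfe)).symm
    _ = (↑(NB.image f) : Set _).ncard := (Set.ncard_coe_finset _).symm
    _ ≤ S.ncard := Set.ncard_le_ncard hsub (Set.toFinite S)
end

section
/- Let v be a major stem of a tree T with legs L_1, …, L_m (m ≥ 2). Then every resolving set S of T^3 contains at least one vertex from L_i for all but at most one index i; in particular, S contains at least m − 1 vertices from the union of the legs attached to v. -/
open SimpleGraph

/- ### Auxiliary lemmas -/

lemma aux_walk_lower {V : Type*} {G : SimpleGraph V} (hc : G.Connected) :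
    ∀ {u w : V} (q : (cube G).Walk u w), G.dist u w ≤ 3 * q.length := by
  intro u w q
  induction q with
  | nil => simp
  | @cons u x w h p ih =>
    have h1 : G.dist u w ≤ G.dist u x + G.dist x w := hc.dist_triangle
    have h2 : G.dist u x ≤ 3 := h.2.2
    simp only [Walk.length_cons]
    omega

lemma aux_exists_cube_walk {V : Type*} {G : SimpleGraph V} :
    ∀ (n : ℕ) {u w : V} (p : G.Walk u w), p.length ≤ n →
      ∃ q : (cube G).Walk u w, q.length ≤ ceil3 p.length := by
  intro n
  induction n with
  | zero =>
    intro u w p hp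
    have := Walk.eq_of_length_eq_zero (Nat.le_zero.mp hp)
    subst this
    exact ⟨Walk.nil, Nat.zero_le _⟩
  | succ n ih =>
    intro u w p hp
    match p with
    | Walk.nil => exact ⟨Walk.nil, Nat.zero_le _⟩
    | Walk.cons h Walk.nil =>
      have hadj : (cube G).Adj u w := ⟨h.ne, by rw [SimpleGraph.dist_eq_one_iff_adj.mpr h],
        by rw [SimpleGraph.dist_eq_one_iff_adj.mpr h]; omega⟩
      exact ⟨Walk.cons hadj Walk.nil, by simp [ceil3]⟩
    | Walk.cons h₁ (Walk.cons h₂ Walk.nil) =>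
      by_cases huw : u = w
      · subst huw
        exact ⟨Walk.nil, by simp [ceil3]⟩
      · have hle : G.dist u w ≤ 2 := by
          simpa using SimpleGraph.dist_le (Walk.cons h₁ (Walk.cons h₂ Walk.nil))
        have hpos : 0 < G.dist u w :=
          SimpleGraph.Reachable.pos_dist_of_ne ⟨Walk.cons h₁ (Walk.cons h₂ Walk.nil)⟩ huw
        exact ⟨Walk.cons ⟨huw, hpos, by omega⟩ Walk.nil, by simp [ceil3]; exact Nat.le_refl 1⟩
    | Walk.cons h₁ (Walk.cons h₂ (@Walk.cons _ _ _ d _ h₃ r)) =>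
      have hrlen : r.length ≤ n := by
        simp only [Walk.length_cons] at hp; omega
      by_cases hud : u = d
      · subst hud
        obtain ⟨q, hq⟩ := ih r hrlen
        refine ⟨q, le_trans hq ?_⟩
        simp only [Walk.length_cons]
        unfold ceil3; omega
      · have hle : G.dist u d ≤ 3 := by
          simpa using SimpleGraph.dist_le (Walk.cons h₁ (Walk.cons h₂ (Walk.cons h₃ Walk.nil)))
        have hpos : 0 < G.dist u d := SimpleGraph.Reachable.pos_dist_of_ne
          ⟨Walk.cons h₁ (Walk.cons h₂ (Walk.cons h₃ Walk.nil))⟩ hud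
        obtain ⟨q, hq⟩ := ih r hrlen
        refine ⟨Walk.cons ⟨hud, hpos, hle⟩ q, ?_⟩
        simp only [Walk.length_cons]
        change q.length + 1 ≤ _; unfold ceil3 at *; omega

lemma aux_cube_dist_eq {V : Type*} {G : SimpleGraph V} (hc : G.Connected) (u w : V) :
    (cube G).dist u w = ceil3 (G.dist u w) := by
  obtain ⟨p, hp⟩ := hc.exists_walk_length_eq_dist u w
  obtain ⟨q, hq⟩ := aux_exists_cube_walk p.length p le_rfl
  apply le_antisymm
  · exact le_trans (SimpleGraph.dist_le q) (hp ▸ hq)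
  · obtain ⟨r, hr⟩ := SimpleGraph.Reachable.exists_walk_length_eq_dist ⟨q⟩
    have hl := aux_walk_lower hc r
    rw [hr] at hl
    unfold ceil3; omega

lemma aux_reachable_induce {V : Type*} {G : SimpleGraph V} {v : V} :
    ∀ {x y : V} (p : G.Walk x y), v ∉ p.support → ∀ (hx : x ≠ v) (hy : y ≠ v),
      (G.induce {z | z ≠ v}).Reachable ⟨x, hx⟩ ⟨y, hy⟩ := by
  intro x y p
  induction p with
  | nil => intro _ hx hy; exact Reachable.refl _
  | @cons x b y h q ih =>
    intro hv hx hy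
    simp only [Walk.support_cons, List.mem_cons, not_or] at hv
    have hb : b ≠ v := fun e => hv.2 (e ▸ q.start_mem_support)
    have hadj : (G.induce {z | z ≠ v}).Adj ⟨x, hx⟩ ⟨b, hb⟩ := h
    exact (hadj.reachable).trans (ih hv.2 hb hy)

lemma aux_dist_split {V : Type*} {G : SimpleGraph V} (hc : G.Connected) {v s a : V}
    (hs : s ≠ v) (ha : a ≠ v)
    (hnr : ¬ (G.induce {z | z ≠ v}).Reachable ⟨s, hs⟩ ⟨a, ha⟩) :
    G.dist s a = G.dist s v + G.dist v a := by
  classical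
  apply le_antisymm hc.dist_triangle
  obtain ⟨p, hp⟩ := hc.exists_walk_length_eq_dist s a
  have hv : v ∈ p.support := by
    by_contra h
    exact hnr (aux_reachable_induce p h hs ha)
  calc G.dist s v + G.dist v a
      ≤ (p.takeUntil v hv).length + (p.dropUntil v hv).length :=
        Nat.add_le_add (SimpleGraph.dist_le _) (SimpleGraph.dist_le _)
    _ = p.length := by rw [← Walk.length_append, p.take_spec hv]
    _ = G.dist s a := hp

lemma aux_find_nbr {V : Type*} {G : SimpleGraph V} {v : V} :
    ∀ {z y : V} (p : G.Walk z y), y = v → ∀ (hz : z ≠ v),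
      ∃ (a : V) (ha : a ≠ v), G.Adj v a ∧
        (G.induce {x | x ≠ v}).Reachable ⟨z, hz⟩ ⟨a, ha⟩ := by
  intro z y p
  induction p with
  | nil => intro hy hz; exact absurd hy hz
  | @cons z b y h q ih =>
    intro hy hz
    by_cases hb : b = v
    · subst hb
      exact ⟨z, hz, h.symm, Reachable.refl _⟩
    · obtain ⟨a, ha, hadj, hr⟩ := ih hy hb
      have hadj' : (G.induce {x | x ≠ v}).Adj ⟨z, hz⟩ ⟨b, hb⟩ := h
      exact ⟨a, ha, hadj, hadj'.reachable.trans hr⟩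

lemma aux_comp_nbr {V : Type*} {G : SimpleGraph V} (hc : G.Connected) {v : V}
    (D : (G.induce {x | x ≠ v}).ConnectedComponent) :
    ∃ a : {x // x ∈ {x | x ≠ v}}, a ∈ D.supp ∧ G.Adj v (a : V) := by
  obtain ⟨y, hy⟩ := D.exists_rep
  obtain ⟨p⟩ := hc.preconnected (y : V) v
  obtain ⟨a, ha, hadj, hr⟩ := aux_find_nbr p rfl y.prop
  refine ⟨⟨a, ha⟩, ?_, hadj⟩
  rw [ConnectedComponent.mem_supp_iff, ← hy]
  have : (⟨(y : V), y.prop⟩ : {x // x ∈ {x | x ≠ v}}) = y := rfl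
  exact (ConnectedComponent.eq.mpr (this ▸ hr)).symm

/-- A resolving set of the cube hits every leg of a major stem with at most one
exception; in particular it contains at least m − 1 vertices from the legs. -/
theorem resolving_hits_legs {V : Type*} [Fintype V] (G : SimpleGraph V)
    [DecidableRel G.Adj] (hT : G.IsTree) (v : V) (hdeg : 3 ≤ G.degree v)
    (m : ℕ) (hm : 2 ≤ m)
    (L : Fin m → (G.induce {x | x ≠ v}).ConnectedComponent)
    (hinj : Function.Injective L) (hleg : ∀ i, IsLegComp G v (L i))
    (S : Set V) (hS : IsResolving (cube G) S) :
    (∀ i j : Fin m, S ∩ (Subtype.val '' (L i).supp) = ∅ →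
        S ∩ (Subtype.val '' (L j).supp) = ∅ → i = j) ∧
    m - 1 ≤ (S ∩ ⋃ i, Subtype.val '' (L i).supp).ncard := by
  classical
  have hc : G.Connected := hT.isConnected
  -- Part 1
  have part1 : ∀ i j : Fin m, S ∩ (Subtype.val '' (L i).supp) = ∅ →
      S ∩ (Subtype.val '' (L j).supp) = ∅ → i = j := by
    intro i j hi hj
    by_contra hij
    have hLL : L i ≠ L j := fun e => hij (hinj e)
    obtain ⟨a, haD, hadja⟩ := aux_comp_nbr hc (L i)
    obtain ⟨b, hbD, hadjb⟩ := aux_comp_nbr hc (L j)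
    have hab : (a : V) ≠ (b : V) := by
      intro e
      apply hLL
      rw [← (ConnectedComponent.mem_supp_iff _ _).mp haD,
          ← (ConnectedComponent.mem_supp_iff _ _).mp hbD]
      congr 1
      exact Subtype.ext e
    obtain ⟨s, hsS, hsd⟩ := hS (a : V) (b : V) hab
    apply hsd
    rw [aux_cube_dist_eq hc, aux_cube_dist_eq hc]
    congr 1
    by_cases hsv : s = v
    · subst hsv
      rw [SimpleGraph.dist_eq_one_iff_adj.mpr hadja,
          SimpleGraph.dist_eq_one_iff_adj.mpr hadjb]
    · have hnotmem : ∀ (k : Fin m), S ∩ (Subtype.val '' (L k).supp) = ∅ →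
          ∀ (c : {x // x ∈ {x | x ≠ v}}), c ∈ (L k).supp →
          ¬ (G.induce {x | x ≠ v}).Reachable ⟨s, hsv⟩ c := by
        intro k hk c hcD hr
        have : s ∈ S ∩ (Subtype.val '' (L k).supp) := by
          refine ⟨hsS, ⟨⟨s, hsv⟩, ?_, rfl⟩⟩
          rw [ConnectedComponent.mem_supp_iff, ← (ConnectedComponent.mem_supp_iff _ _).mp hcD]
          exact ConnectedComponent.eq.mpr hr
        rw [hk] at this
        exact this
      have hra : ¬ (G.induce {x | x ≠ v}).Reachable ⟨s, hsv⟩ ⟨(a : V), a.prop⟩ :=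
        hnotmem i hi a (by simpa using haD)
      have hrb : ¬ (G.induce {x | x ≠ v}).Reachable ⟨s, hsv⟩ ⟨(b : V), b.prop⟩ :=
        hnotmem j hj b (by simpa using hbD)
      rw [aux_dist_split hc hsv a.prop hra, aux_dist_split hc hsv b.prop hrb,
          SimpleGraph.dist_eq_one_iff_adj.mpr hadja,
          SimpleGraph.dist_eq_one_iff_adj.mpr hadjb]
  refine ⟨part1, ?_⟩
  -- Part 2
  set A : Fin m → Set V := fun i => S ∩ (Subtype.val '' (L i).supp) with hA
  set T : Finset (Fin m) := Finset.univ.filter (fun i => (A i).Nonempty) with hTdef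
  have hcompl : Tᶜ.card ≤ 1 := by
    apply Finset.card_le_one.mpr
    intro i hi j hj
    simp only [hTdef, Finset.mem_compl, Finset.mem_filter, Finset.mem_univ, true_and,
      Set.not_nonempty_iff_eq_empty] at hi hj
    exact part1 i j hi hj
  have hTcard : m - 1 ≤ T.card := by
    have := Finset.card_compl T
    simp only [Fintype.card_fin] at this
    omega
  set f : Fin m → V := fun i => if h : (A i).Nonempty then h.choose else v with hf
  have hmem : ∀ i ∈ T, f i ∈ (S ∩ ⋃ k, Subtype.val '' (L k).supp) := by
    intro i hi
    simp only [hTdef, Finset.mem_filter, Finset.mem_univ, true_and] at hi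
    have : f i ∈ A i := by rw [hf]; simp only [hi, dif_pos]; exact hi.choose_spec
    exact ⟨this.1, Set.mem_iUnion.mpr ⟨i, this.2⟩⟩
  have hinjOn : Set.InjOn f T := by
    intro i hi j hj he
    simp only [hTdef, Finset.coe_filter, Set.mem_setOf_eq] at hi hj
    have hfi : f i ∈ A i := by rw [hf]; simp only [hi.2, dif_pos]; exact hi.2.choose_spec
    have hfj : f j ∈ A j := by rw [hf]; simp only [hj.2, dif_pos]; exact hj.2.choose_spec
    rw [he] at hfi
    obtain ⟨x, hx, hxe⟩ := hfi.2
    obtain ⟨y, hy, hye⟩ := hfj.2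
    have hxy : x = y := Subtype.ext (by rw [hxe, hye])
    apply hinj
    rw [← (ConnectedComponent.mem_supp_iff _ _).mp hx,
        ← (ConnectedComponent.mem_supp_iff _ _).mp hy, hxy]
  have hfin : (S ∩ ⋃ k, Subtype.val '' (L k).supp).Finite := Set.toFinite _
  have hcard : T.card ≤ (S ∩ ⋃ k, Subtype.val '' (L k).supp).ncard := by
    rw [Set.ncard_eq_toFinset_card _ hfin]
    apply Finset.card_le_card_of_injOn f
    · intro i hi
      rw [Finset.mem_coe, Set.Finite.mem_toFinset]
      exact hmem i hi
    · exact hinjOn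
  omega
end

section
/- For every positive integer n there exists a tree T such that the metric dimension of its cube equals n: β(T^3) = n. -/
open SimpleGraph

def starG (n : ℕ) : SimpleGraph (Fin (n+1)) where
  Adj u v := u ≠ v ∧ (u = 0 ∨ v = 0)
  symm := ⟨fun u v ⟨h1, h2⟩ => ⟨h1.symm, h2.symm⟩⟩
  loopless := ⟨fun u ⟨h, _⟩ => h rfl⟩

lemma starG_connected (n : ℕ) : (starG n).Connected := by
  rw [connected_iff]
  refine ⟨fun u v => ?_, ⟨0⟩⟩
  by_cases huv : u = v
  · exact huv ▸ Reachable.refl u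
  by_cases hu : u = 0
  · exact Adj.reachable ⟨huv, Or.inl hu⟩
  by_cases hv : v = 0
  · exact Adj.reachable ⟨huv, Or.inr hv⟩
  exact (Adj.reachable (show (starG n).Adj u 0 from ⟨hu, Or.inr rfl⟩)).trans
    (Adj.reachable (show (starG n).Adj 0 v from ⟨fun h => hv h.symm, Or.inl rfl⟩))

lemma starG_isAcyclic (n : ℕ) : (starG n).IsAcyclic := by
  intro v c hc
  have h3 := hc.three_le_length
  cases c with
  | nil => simp at h3
  | cons h₁ c =>
  rename_i s1
  cases c with
  | nil => simp at h3
  | cons h₂ c =>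
  rename_i s2
  cases c with
  | nil => simp at h3
  | cons h₃ q =>
    rename_i s3
    have hnd := ((Walk.isCycle_def _).mp hc).2.2
    simp [Walk.support_cons, List.nodup_cons] at hnd
    rcases h₂.2 with hs1 | hs2
    · rcases h₃.2 with hs2' | hs3
      · exact h₂.1 (hs1.trans hs2'.symm)
      · exact hnd.1.2 ((hs1.trans hs3.symm) ▸ q.start_mem_support)
    · rcases h₁.2 with hv | hs1'
      · exact hnd.2.1 ((hs2.trans hv.symm) ▸ q.end_mem_support)
      · exact h₂.1 (hs1'.trans hs2.symm)

lemma starG_dist_le_two (n : ℕ) (u v : Fin (n+1)) : (starG n).dist u v ≤ 2 := by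
  by_cases huv : u = v
  · simp [huv, SimpleGraph.dist_self]
  by_cases hu : u = 0
  · exact le_trans (le_of_eq (dist_eq_one_iff_adj.mpr ⟨huv, Or.inl hu⟩)) one_le_two
  by_cases hv : v = 0
  · exact le_trans (le_of_eq (dist_eq_one_iff_adj.mpr ⟨huv, Or.inr hv⟩)) one_le_two
  · exact le_trans (SimpleGraph.dist_le
      (Walk.cons (⟨hu, Or.inr rfl⟩ : (starG n).Adj u 0)
        (Walk.cons (⟨fun h => hv h.symm, Or.inl rfl⟩ : (starG n).Adj 0 v) Walk.nil)))
      (le_of_eq rfl)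

lemma cube_starG_dist {n : ℕ} {u v : Fin (n+1)} (h : u ≠ v) :
    (cube (starG n)).dist u v = 1 :=
  dist_eq_one_iff_adj.mpr
    ⟨h, (starG_connected n).pos_dist_of_ne h,
      le_trans (starG_dist_le_two n u v) (by norm_num)⟩

/-- Every positive integer is attained as the metric dimension of the cube of
some tree. -/
theorem exists_tree_cube_metricDim (n : ℕ) (hn : 0 < n) :
    ∃ (m : ℕ) (G : SimpleGraph (Fin m)), 2 ≤ m ∧ G.IsTree ∧
      metricDim (cube G) = n := by
  refine ⟨n + 1, starG n, by omega, ⟨starG_connected n, starG_isAcyclic n⟩, ?_⟩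
  have hmem : n ∈ {k | ∃ S : Finset (Fin (n+1)), S.card = k ∧
      IsResolving (cube (starG n)) (S : Set (Fin (n+1)))} := by
    refine ⟨({0} : Finset (Fin (n+1)))ᶜ, by simp [Finset.card_compl], ?_⟩
    intro u v huv
    by_cases hu : u = 0
    · have hv : v ≠ 0 := fun h => huv (hu.trans h.symm)
      refine ⟨v, by simpa using hv, ?_⟩
      rw [cube_starG_dist (Ne.symm huv), SimpleGraph.dist_self]
      omega
    · refine ⟨u, by simpa using hu, ?_⟩
      rw [cube_starG_dist huv, SimpleGraph.dist_self]
      omega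
  have hlb : ∀ k ∈ {k | ∃ S : Finset (Fin (n+1)), S.card = k ∧
      IsResolving (cube (starG n)) (S : Set (Fin (n+1)))}, n ≤ k := by
    rintro k ⟨S, hS, hres⟩
    by_contra hlt
    push_neg at hlt
    have hc : 1 < Sᶜ.card := by
      have := Finset.card_compl S
      simp only [Fintype.card_fin] at this
      omega
    obtain ⟨a, ha, b, hb, hab⟩ := Finset.one_lt_card.mp hc
    obtain ⟨s, hsS, hd⟩ := hres a b hab
    rw [Finset.mem_coe] at hsS
    have hsa : s ≠ a := fun h => (Finset.mem_compl.mp ha) (h ▸ hsS)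
    have hsb : s ≠ b := fun h => (Finset.mem_compl.mp hb) (h ▸ hsS)
    exact hd ((cube_starG_dist hsa).trans (cube_starG_dist hsb).symm)
  exact le_antisymm (Nat.sInf_le hmem) (le_csInf ⟨n, hmem⟩ hlb)
end
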